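/- Let n ≥ 2, d ≥ 1 and let ρ : sVV_n → Mat_d(ℂ) be a calibrated representation. Suppose the representation is indecomposable, i.e. there is no direct sum decomposition ℂ^d = U ⊕ W with U and W nonzero subspaces each invariant under ρ(a) for all a ∈ sVV_n, and suppose ρ(e_i) ≠ 0 for some 1 ≤ i ≤ n−1. Then ρ(Θ̃) = 0, where Θ̃ = ∏_{1 ≤ i < j ≤ n} (1 − (y_i − y_j)^2) ∈ sVV_n. -/
import Mathlib


noncomputable section

namespace Periplectic

/-- Generators of the degenerate affine periplectic Brauer algebra on `n` strands:
`S i` for `1 ≤ i ≤ n-1`, `E i` for `1 ≤ i ≤ n-1`, `Y j` for `1 ≤ j ≤ n`. -/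
inductive Gen (n : ℕ) : Type
  | S (i : ℕ) (h : 1 ≤ i ∧ i ≤ n - 1) : Gen n
  | E (i : ℕ) (h : 1 ≤ i ∧ i ≤ n - 1) : Gen n
  | Y (j : ℕ) (h : 1 ≤ j ∧ j ≤ n) : Gen n

/-- The free `ℂ`-algebra on the generators. -/
abbrev FA (n : ℕ) : Type := FreeAlgebra ℂ (Gen n)

def fS (n i : ℕ) (h : 1 ≤ i ∧ i ≤ n - 1) : FA n := FreeAlgebra.ι ℂ (Gen.S i h)
def fE (n i : ℕ) (h : 1 ≤ i ∧ i ≤ n - 1) : FA n := FreeAlgebra.ι ℂ (Gen.E i h)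
def fY (n j : ℕ) (h : 1 ≤ j ∧ j ≤ n) : FA n := FreeAlgebra.ι ℂ (Gen.Y j h)

/-- The defining relations of the degenerate affine periplectic Brauer algebra. -/
inductive Rel (n : ℕ) : FA n → FA n → Prop
  /- (VV1)  s_i² = 1 -/
  | s_sq (i : ℕ) (h : 1 ≤ i ∧ i ≤ n - 1) :
      Rel n (fS n i h * fS n i h) 1
  /- (VV2)(i)  s_i e_j = e_j s_i for |i-j| > 1 -/
  | se_comm (i j : ℕ) (hi : 1 ≤ i ∧ i ≤ n - 1) (hj : 1 ≤ j ∧ j ≤ n - 1)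
      (hij : i + 1 < j ∨ j + 1 < i) :
      Rel n (fS n i hi * fE n j hj) (fE n j hj * fS n i hi)
  /- (VV2)(ii)  e_i e_j = e_j e_i for |i-j| > 1 -/
  | ee_comm (i j : ℕ) (hi : 1 ≤ i ∧ i ≤ n - 1) (hj : 1 ≤ j ∧ j ≤ n - 1)
      (hij : i + 1 < j ∨ j + 1 < i) :
      Rel n (fE n i hi * fE n j hj) (fE n j hj * fE n i hi)
  /- (VV2)(iii)  e_i y_j = y_j e_i for j ∉ {i, i+1} -/
  | ey_comm (i j : ℕ) (hi : 1 ≤ i ∧ i ≤ n - 1) (hj : 1 ≤ j ∧ j ≤ n)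
      (hij : j ≠ i ∧ j ≠ i + 1) :
      Rel n (fE n i hi * fY n j hj) (fY n j hj * fE n i hi)
  /- (VV2)(iv)  y_i y_j = y_j y_i -/
  | yy_comm (i j : ℕ) (hi : 1 ≤ i ∧ i ≤ n) (hj : 1 ≤ j ∧ j ≤ n) :
      Rel n (fY n i hi * fY n j hj) (fY n j hj * fY n i hi)
  /- (VV3)(i)  s_i s_j = s_j s_i for |i-j| > 1 -/
  | ss_comm (i j : ℕ) (hi : 1 ≤ i ∧ i ≤ n - 1) (hj : 1 ≤ j ∧ j ≤ n - 1)
      (hij : i + 1 < j ∨ j + 1 < i) :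
      Rel n (fS n i hi * fS n j hj) (fS n j hj * fS n i hi)
  /- (VV3)(ii)  braid relation -/
  | braid (i : ℕ) (hi : 1 ≤ i ∧ i ≤ n - 1) (hi1 : 1 ≤ i + 1 ∧ i + 1 ≤ n - 1) :
      Rel n (fS n i hi * fS n (i+1) hi1 * fS n i hi)
            (fS n (i+1) hi1 * fS n i hi * fS n (i+1) hi1)
  /- (VV3)(iii)  s_i y_j = y_j s_i for j ∉ {i, i+1} -/
  | sy_comm (i j : ℕ) (hi : 1 ≤ i ∧ i ≤ n - 1) (hj : 1 ≤ j ∧ j ≤ n)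
      (hij : j ≠ i ∧ j ≠ i + 1) :
      Rel n (fS n i hi * fY n j hj) (fY n j hj * fS n i hi)
  /- (VV4)(i)  e_{i+1} e_i e_{i+1} = -e_{i+1} -/
  | eee_up (i : ℕ) (hi : 1 ≤ i ∧ i ≤ n - 1) (hi1 : 1 ≤ i + 1 ∧ i + 1 ≤ n - 1) :
      Rel n (fE n (i+1) hi1 * fE n i hi * fE n (i+1) hi1) (-(fE n (i+1) hi1))
  /- (VV4)(ii)  e_i e_{i+1} e_i = -e_i -/
  | eee_down (i : ℕ) (hi : 1 ≤ i ∧ i ≤ n - 1) (hi1 : 1 ≤ i + 1 ∧ i + 1 ≤ n - 1) :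
      Rel n (fE n i hi * fE n (i+1) hi1 * fE n i hi) (-(fE n i hi))
  /- (VV5)(i)  e_i s_i = e_i  and  s_i e_i = -e_i -/
  | es (i : ℕ) (hi : 1 ≤ i ∧ i ≤ n - 1) :
      Rel n (fE n i hi * fS n i hi) (fE n i hi)
  | se (i : ℕ) (hi : 1 ≤ i ∧ i ≤ n - 1) :
      Rel n (fS n i hi * fE n i hi) (-(fE n i hi))
  /- (VV5)(ii)  s_i e_{i+1} e_i = s_{i+1} e_i -/
  | see (i : ℕ) (hi : 1 ≤ i ∧ i ≤ n - 1) (hi1 : 1 ≤ i + 1 ∧ i + 1 ≤ n - 1) :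
      Rel n (fS n i hi * fE n (i+1) hi1 * fE n i hi) (fS n (i+1) hi1 * fE n i hi)
  /- (VV5)(iii)  s_{i+1} e_i e_{i+1} = -s_i e_{i+1} -/
  | see' (i : ℕ) (hi : 1 ≤ i ∧ i ≤ n - 1) (hi1 : 1 ≤ i + 1 ∧ i + 1 ≤ n - 1) :
      Rel n (fS n (i+1) hi1 * fE n i hi * fE n (i+1) hi1) (-(fS n i hi * fE n (i+1) hi1))
  /- (VV5)(iv)  e_{i+1} e_i s_{i+1} = e_{i+1} s_i -/
  | ees (i : ℕ) (hi : 1 ≤ i ∧ i ≤ n - 1) (hi1 : 1 ≤ i + 1 ∧ i + 1 ≤ n - 1) :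
      Rel n (fE n (i+1) hi1 * fE n i hi * fS n (i+1) hi1) (fE n (i+1) hi1 * fS n i hi)
  /- (VV5)(v)  e_i e_{i+1} s_i = -e_i s_{i+1} -/
  | ees' (i : ℕ) (hi : 1 ≤ i ∧ i ≤ n - 1) (hi1 : 1 ≤ i + 1 ∧ i + 1 ≤ n - 1) :
      Rel n (fE n i hi * fE n (i+1) hi1 * fS n i hi) (-(fE n i hi * fS n (i+1) hi1))
  /- (VV6)  e_i² = 0 -/
  | e_sq (i : ℕ) (hi : 1 ≤ i ∧ i ≤ n - 1) :
      Rel n (fE n i hi * fE n i hi) 0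
  /- (VV7)(i)  s_i y_i - y_{i+1} s_i = -e_i - 1 -/
  | sy_rel (i : ℕ) (hi : 1 ≤ i ∧ i ≤ n - 1) (hyi : 1 ≤ i ∧ i ≤ n)
      (hyi1 : 1 ≤ i + 1 ∧ i + 1 ≤ n) :
      Rel n (fS n i hi * fY n i hyi - fY n (i+1) hyi1 * fS n i hi) (-(fE n i hi) - 1)
  /- (VV7)(ii)  y_i s_i - s_i y_{i+1} = e_i - 1 -/
  | ys_rel (i : ℕ) (hi : 1 ≤ i ∧ i ≤ n - 1) (hyi : 1 ≤ i ∧ i ≤ n)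
      (hyi1 : 1 ≤ i + 1 ∧ i + 1 ≤ n) :
      Rel n (fY n i hyi * fS n i hi - fS n i hi * fY n (i+1) hyi1) (fE n i hi - 1)
  /- (VV8)(i)  e_i (y_i - y_{i+1}) = -e_i -/
  | e_ydiff (i : ℕ) (hi : 1 ≤ i ∧ i ≤ n - 1) (hyi : 1 ≤ i ∧ i ≤ n)
      (hyi1 : 1 ≤ i + 1 ∧ i + 1 ≤ n) :
      Rel n (fE n i hi * (fY n i hyi - fY n (i+1) hyi1)) (-(fE n i hi))
  /- (VV8)(ii)  (y_i - y_{i+1}) e_i = e_i -/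
  | ydiff_e (i : ℕ) (hi : 1 ≤ i ∧ i ≤ n - 1) (hyi : 1 ≤ i ∧ i ≤ n)
      (hyi1 : 1 ≤ i + 1 ∧ i + 1 ≤ n) :
      Rel n ((fY n i hyi - fY n (i+1) hyi1) * fE n i hi) (fE n i hi)

/-- The degenerate affine periplectic Brauer algebra `sVV n`. -/
abbrev sVV (n : ℕ) : Type := RingQuot (Rel n)

/-- The generator `s_i` of `sVV n`. -/
def sgen (n i : ℕ) (h : 1 ≤ i ∧ i ≤ n - 1) : sVV n :=
  RingQuot.mkAlgHom ℂ (Rel n) (fS n i h)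

/-- The generator `e_i` of `sVV n`. -/
def egen (n i : ℕ) (h : 1 ≤ i ∧ i ≤ n - 1) : sVV n :=
  RingQuot.mkAlgHom ℂ (Rel n) (fE n i h)

/-- The generator `y_j` of `sVV n`. -/
def ygen (n j : ℕ) (h : 1 ≤ j ∧ j ≤ n) : sVV n :=
  RingQuot.mkAlgHom ℂ (Rel n) (fY n j h)

/-- Total version of `s_i` (equal to `sgen n i _` when `1 ≤ i ≤ n-1`, and `0` otherwise). -/
def ss (n i : ℕ) : sVV n := if h : 1 ≤ i ∧ i ≤ n - 1 then sgen n i h else 0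

/-- Total version of `e_i`. -/
def ee (n i : ℕ) : sVV n := if h : 1 ≤ i ∧ i ≤ n - 1 then egen n i h else 0

/-- Total version of `y_j`. -/
def yy (n j : ℕ) : sVV n := if h : 1 ≤ j ∧ j ≤ n then ygen n j h else 0


/-- A calibrated representation of `sVV n` of dimension `d`: a unital `ℂ`-algebra homomorphism
to `d × d` matrices under which every `y_j` acts by a diagonal matrix. -/
def IsCalibrated {n d : ℕ} (ρ : sVV n →ₐ[ℂ] Matrix (Fin d) (Fin d) ℂ) : Prop :=
  ∀ j : ℕ, 1 ≤ j → j ≤ n → (ρ (yy n j)).IsDiag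

/-- Indecomposability of a matrix representation of `sVV n`: there is no direct sum
decomposition `ℂ^d = U ⊕ W` with `U, W` nonzero subspaces invariant under all `ρ a`. -/
def IsIndecomposableRep {n d : ℕ} (ρ : sVV n →ₐ[ℂ] Matrix (Fin d) (Fin d) ℂ) : Prop :=
  ¬ ∃ U W : Submodule ℂ (Fin d → ℂ), U ≠ ⊥ ∧ W ≠ ⊥ ∧ IsCompl U W ∧
      (∀ a : sVV n, ∀ x ∈ U, (ρ a).mulVec x ∈ U) ∧
      (∀ a : sVV n, ∀ x ∈ W, (ρ a).mulVec x ∈ W)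

/-- The central element `Θ̃ = ∏_{1 ≤ i < j ≤ n} (1 - (y_i - y_j)²)` of `sVV n`. -/
def thetaTilde (n : ℕ) : sVV n :=
  ((List.range n).map (fun a =>
    (((List.range n).filter fun b => decide (a < b)).map
      fun b => (1 : sVV n) - (yy n (a+1) - yy n (b+1)) ^ 2).prod)).prod

/-! ### Auxiliary material -/

section MatrixAux

variable {d : ℕ}

lemma diag_mul_apply {A B : Matrix (Fin d) (Fin d) ℂ} (hA : A.IsDiag) (t u : Fin d) :
    (A * B) t u = A t t * B t u := by
  rw [Matrix.mul_apply, Finset.sum_eq_single t]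
  · intro b _ hb
    rw [hA (Ne.symm hb), zero_mul]
  · intro h; exact absurd (Finset.mem_univ t) h

lemma mul_diag_apply {A B : Matrix (Fin d) (Fin d) ℂ} (hB : B.IsDiag) (t u : Fin d) :
    (A * B) t u = A t u * B u u := by
  rw [Matrix.mul_apply, Finset.sum_eq_single u]
  · intro b _ hb
    rw [hB hb, mul_zero]
  · intro h; exact absurd (Finset.mem_univ u) h

lemma isDiag_mul {A B : Matrix (Fin d) (Fin d) ℂ} (hA : A.IsDiag) (hB : B.IsDiag) :
    (A * B).IsDiag := by
  intro i j hij
  rw [diag_mul_apply hA, hB hij, mul_zero]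

lemma list_prod_isDiag : ∀ {L : List (Matrix (Fin d) (Fin d) ℂ)},
    (∀ A ∈ L, A.IsDiag) → L.prod.IsDiag := by
  intro L
  induction L with
  | nil => intro _; simpa using Matrix.isDiag_one
  | cons A L ih =>
    intro h
    rw [List.prod_cons]
    exact isDiag_mul (h A (by simp)) (ih fun B hB => h B (by simp [hB]))

lemma list_prod_diag_apply : ∀ {L : List (Matrix (Fin d) (Fin d) ℂ)},
    (∀ A ∈ L, A.IsDiag) → ∀ t : Fin d, L.prod t t = (L.map (fun A => A t t)).prod := by
  intro L
  induction L with
  | nil => intro _ t; simp [Matrix.one_apply_eq]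
  | cons A L ih =>
    intro h t
    rw [List.prod_cons, diag_mul_apply (h A (by simp)), List.map_cons, List.prod_cons,
      ih (fun B hB => h B (by simp [hB])) t]

end MatrixAux

section ThetaF

/-- Scalar counterpart of `thetaTilde`. -/
def thetaF (n : ℕ) (x : ℕ → ℂ) : ℂ :=
  ((List.range n).map (fun a =>
    (((List.range n).filter fun b => decide (a < b)).map
      fun b => (1 : ℂ) - (x (a+1) - x (b+1)) ^ 2).prod)).prod

lemma list_range_map_prod (n : ℕ) (f : ℕ → ℂ) :
    ((List.range n).map f).prod = ∏ i ∈ Finset.range n, f i := by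
  induction n with
  | zero => simp
  | succ m ih =>
    rw [Finset.prod_range_succ, List.range_succ, List.map_append, List.prod_append, ih]
    simp

lemma list_filter_map_prod (p : ℕ → Bool) (f : ℕ → ℂ) : ∀ (l : List ℕ),
    ((l.filter p).map f).prod = (l.map (fun i => if p i then f i else 1)).prod := by
  intro l
  induction l with
  | nil => simp
  | cons a l ih =>
    by_cases hp : p a
    · simp [List.filter_cons, hp, ih]
    · simp only [Bool.not_eq_true] at hp
      simp [List.filter_cons, hp, ih]

lemma thetaF_eq_finset (n : ℕ) (x : ℕ → ℂ) :
    thetaF n x = ∏ q ∈ ((Finset.range n) ×ˢ (Finset.range n)).filter (fun q => q.1 < q.2),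
      ((1 : ℂ) - (x (q.1+1) - x (q.2+1)) ^ 2) := by
  rw [Finset.prod_filter, Finset.prod_product, thetaF, list_range_map_prod]
  refine Finset.prod_congr rfl fun a _ => ?_
  rw [list_filter_map_prod, list_range_map_prod]
  refine Finset.prod_congr rfl fun b _ => ?_
  simp

lemma thetaF_eq_zero {n k : ℕ} {x : ℕ → ℂ} (hk1 : 1 ≤ k) (hk : k < n)
    (h : (x k - x (k+1)) ^ 2 = 1) : thetaF n x = 0 := by
  rw [thetaF_eq_finset]
  refine Finset.prod_eq_zero (i := (k-1, k)) ?_ ?_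
  · simp only [Finset.mem_filter, Finset.mem_product, Finset.mem_range]
    omega
  · have hkk : k - 1 + 1 = k := by omega
    rw [hkk, h, sub_self]

lemma thetaF_swap {n : ℕ} (p q : ℕ) (hp : p < n) (hq : q < n) (x x' : ℕ → ℂ)
    (hx : ∀ a, a < n → x' (a+1) = x ((Equiv.swap p q) a + 1)) :
    thetaF n x' = thetaF n x := by
  classical
  set τ : ℕ ≃ ℕ := Equiv.swap p q with hτ
  have hτrange : ∀ a, a < n → τ a < n := by
    intro a ha
    rcases eq_or_ne a p with rfl | hap
    · rw [hτ, Equiv.swap_apply_left]; exact hq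
    rcases eq_or_ne a q with rfl | haq
    · rw [hτ, Equiv.swap_apply_right]; exact hp
    · rw [hτ, Equiv.swap_apply_of_ne_of_ne hap haq]; exact ha
  have hττ : ∀ a, τ (τ a) = a := fun a => Equiv.swap_apply_self p q a
  rw [thetaF_eq_finset, thetaF_eq_finset]
  set s := ((Finset.range n) ×ˢ (Finset.range n)).filter (fun r => r.1 < r.2) with hs
  set φ : ℕ × ℕ → ℕ × ℕ := fun r => if τ r.1 < τ r.2 then (τ r.1, τ r.2) else (τ r.2, τ r.1)
    with hφ
  have hmem : ∀ r ∈ s, φ r ∈ s := by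
    intro r hr
    simp only [hs, Finset.mem_filter, Finset.mem_product, Finset.mem_range] at hr ⊢
    obtain ⟨⟨h1, h2⟩, h3⟩ := hr
    have hne : τ r.1 ≠ τ r.2 := fun h => (Nat.ne_of_lt h3) (τ.injective h)
    by_cases hlt : τ r.1 < τ r.2
    · simp only [hφ, if_pos hlt]
      exact ⟨⟨hτrange _ h1, hτrange _ h2⟩, hlt⟩
    · simp only [hφ, if_neg hlt]
      exact ⟨⟨hτrange _ h2, hτrange _ h1⟩, by omega⟩
  have hinv : ∀ r ∈ s, φ (φ r) = r := by
    intro r hr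
    simp only [hs, Finset.mem_filter, Finset.mem_product, Finset.mem_range] at hr
    obtain ⟨⟨h1, h2⟩, h3⟩ := hr
    by_cases hlt : τ r.1 < τ r.2
    · simp only [hφ, if_pos hlt, hττ]
      rw [if_pos h3]
    · simp only [hφ, if_neg hlt, hττ]
      have : ¬ r.2 < r.1 := by omega
      simp [this, h3]
  refine Finset.prod_nbij' φ φ hmem hmem hinv hinv ?_
  intro r hr
  simp only [hs, Finset.mem_filter, Finset.mem_product, Finset.mem_range] at hr
  obtain ⟨⟨h1, h2⟩, _⟩ := hr
  rw [hx r.1 h1, hx r.2 h2]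
  by_cases hlt : τ r.1 < τ r.2
  · simp only [hφ, if_pos hlt]
  · simp only [hφ, if_neg hlt]
    ring

end ThetaF
section Rep

variable {n d : ℕ} {ρ : sVV n →ₐ[ℂ] Matrix (Fin d) (Fin d) ℂ}

lemma map_rel {x y : FA n} (h : Rel n x y) :
    ρ (RingQuot.mkAlgHom ℂ (Rel n) x) = ρ (RingQuot.mkAlgHom ℂ (Rel n) y) := by
  rw [RingQuot.mkAlgHom_rel _ h]

lemma yy_eq {j : ℕ} (h : 1 ≤ j ∧ j ≤ n) : yy n j = ygen n j h := dif_pos h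

lemma ee_eq {i : ℕ} (h : 1 ≤ i ∧ i ≤ n - 1) : ee n i = egen n i h := dif_pos h

lemma ygen_diag (hcal : IsCalibrated ρ) {j : ℕ} (h : 1 ≤ j ∧ j ≤ n) :
    (ρ (ygen n j h)).IsDiag := by
  rw [← yy_eq h]; exact hcal j h.1 h.2

/-- Weight constraints coming from a nonzero entry of `ρ(e_k)`. -/
lemma e_weight (hcal : IsCalibrated ρ) {k : ℕ} (hk : 1 ≤ k ∧ k ≤ n - 1) {t u : Fin d}
    (hE : ρ (egen n k hk) t u ≠ 0) :
    ρ (yy n k) t t - ρ (yy n (k+1)) t t = 1 ∧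
      ρ (yy n k) u u - ρ (yy n (k+1)) u u = -1 := by
  have hyk : 1 ≤ k ∧ k ≤ n := ⟨hk.1, by omega⟩
  have hyk1 : 1 ≤ k + 1 ∧ k + 1 ≤ n := ⟨by omega, by omega⟩
  have hdiag : (ρ (ygen n k hyk) - ρ (ygen n (k+1) hyk1)).IsDiag :=
    (ygen_diag hcal hyk).sub (ygen_diag hcal hyk1)
  have hrel1 : ρ (egen n k hk) * (ρ (ygen n k hyk) - ρ (ygen n (k+1) hyk1))
      = -(ρ (egen n k hk)) := by
    have h := map_rel (ρ := ρ) (Rel.e_ydiff k hk hyk hyk1)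
    simpa [egen, ygen, map_mul, map_sub, map_neg] using h
  have hrel2 : (ρ (ygen n k hyk) - ρ (ygen n (k+1) hyk1)) * ρ (egen n k hk)
      = ρ (egen n k hk) := by
    have h := map_rel (ρ := ρ) (Rel.ydiff_e k hk hyk hyk1)
    simpa [egen, ygen, map_mul, map_sub] using h
  constructor
  · have h1 : ((ρ (ygen n k hyk) - ρ (ygen n (k+1) hyk1)) * ρ (egen n k hk)) t u
        = ρ (egen n k hk) t u := by rw [hrel2]
    rw [diag_mul_apply hdiag] at h1
    have h2 : ((ρ (ygen n k hyk) - ρ (ygen n (k+1) hyk1)) t t - 1) * ρ (egen n k hk) t u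
        = 0 := by rw [sub_mul, h1]; ring
    rcases mul_eq_zero.mp h2 with h3 | h3
    · have h4 : (ρ (ygen n k hyk) - ρ (ygen n (k+1) hyk1)) t t = 1 := by
        linear_combination h3
      rw [Matrix.sub_apply] at h4
      rw [yy_eq hyk, yy_eq hyk1]
      exact h4
    · exact absurd h3 hE
  · have h1 : (ρ (egen n k hk) * (ρ (ygen n k hyk) - ρ (ygen n (k+1) hyk1))) t u
        = (-(ρ (egen n k hk))) t u := by rw [hrel1]
    rw [mul_diag_apply hdiag, Matrix.neg_apply] at h1
    have h2 : ρ (egen n k hk) t u * ((ρ (ygen n k hyk) - ρ (ygen n (k+1) hyk1)) u u + 1)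
        = 0 := by rw [mul_add, h1]; ring
    rcases mul_eq_zero.mp h2 with h3 | h3
    · exact absurd h3 hE
    · have h4 : (ρ (ygen n k hyk) - ρ (ygen n (k+1) hyk1)) u u = -1 := by
        linear_combination h3
      rw [Matrix.sub_apply] at h4
      rw [yy_eq hyk, yy_eq hyk1]
      exact h4

/-- Weight constraints coming from a nonzero off-diagonal entry of `ρ(s_k)` at which `ρ(e_k)`
vanishes: the weight of `u` is the weight of `t` with coordinates `k, k+1` swapped. -/
lemma s_weight (hcal : IsCalibrated ρ) {k : ℕ} (hk : 1 ≤ k ∧ k ≤ n - 1) {t u : Fin d}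
    (htu : t ≠ u) (hS : ρ (sgen n k hk) t u ≠ 0) (hE0 : ρ (egen n k hk) t u = 0) :
    ρ (yy n k) u u = ρ (yy n (k+1)) t t ∧ ρ (yy n (k+1)) u u = ρ (yy n k) t t := by
  have hyk : 1 ≤ k ∧ k ≤ n := ⟨hk.1, by omega⟩
  have hyk1 : 1 ≤ k + 1 ∧ k + 1 ≤ n := ⟨by omega, by omega⟩
  have hdk : (ρ (ygen n k hyk)).IsDiag := ygen_diag hcal hyk
  have hdk1 : (ρ (ygen n (k+1) hyk1)).IsDiag := ygen_diag hcal hyk1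
  constructor
  · -- from (VV7)(i)
    have hrel : ρ (sgen n k hk) * ρ (ygen n k hyk)
        - ρ (ygen n (k+1) hyk1) * ρ (sgen n k hk)
        = -(ρ (egen n k hk)) - 1 := by
      have h := map_rel (ρ := ρ) (Rel.sy_rel k hk hyk hyk1)
      simpa [sgen, ygen, egen, map_mul, map_sub, map_neg, map_one] using h
    have h1 : (ρ (sgen n k hk) * ρ (ygen n k hyk)
        - ρ (ygen n (k+1) hyk1) * ρ (sgen n k hk)) t u
        = (-(ρ (egen n k hk)) - 1) t u := by rw [hrel]
    rw [Matrix.sub_apply, mul_diag_apply hdk, diag_mul_apply hdk1, Matrix.sub_apply,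
      Matrix.neg_apply, hE0, Matrix.one_apply_ne htu] at h1
    have h2 : (ρ (ygen n k hyk) u u - ρ (ygen n (k+1) hyk1) t t) * ρ (sgen n k hk) t u
        = 0 := by rw [sub_mul]; linear_combination h1
    rcases mul_eq_zero.mp h2 with h3 | h3
    · rw [yy_eq hyk, yy_eq hyk1]; linear_combination h3
    · exact absurd h3 hS
  · -- from (VV7)(ii)
    have hrel : ρ (ygen n k hyk) * ρ (sgen n k hk)
        - ρ (sgen n k hk) * ρ (ygen n (k+1) hyk1)
        = ρ (egen n k hk) - 1 := by
      have h := map_rel (ρ := ρ) (Rel.ys_rel k hk hyk hyk1)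
      simpa [sgen, ygen, egen, map_mul, map_sub, map_one] using h
    have h1 : (ρ (ygen n k hyk) * ρ (sgen n k hk)
        - ρ (sgen n k hk) * ρ (ygen n (k+1) hyk1)) t u
        = (ρ (egen n k hk) - 1) t u := by rw [hrel]
    rw [Matrix.sub_apply, mul_diag_apply hdk1, diag_mul_apply hdk, Matrix.sub_apply,
      hE0, Matrix.one_apply_ne htu] at h1
    have h2 : (ρ (ygen n (k+1) hyk1) u u - ρ (ygen n k hyk) t t) * ρ (sgen n k hk) t u
        = 0 := by rw [sub_mul]; linear_combination -h1
    rcases mul_eq_zero.mp h2 with h3 | h3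
    · rw [yy_eq hyk, yy_eq hyk1]; linear_combination h3
    · exact absurd h3 hS

/-- `ρ(s_k)` preserves the other weight coordinates. -/
lemma s_weight_other (hcal : IsCalibrated ρ) {k : ℕ} (hk : 1 ≤ k ∧ k ≤ n - 1) {t u : Fin d}
    (hS : ρ (sgen n k hk) t u ≠ 0) {j : ℕ} (hj : 1 ≤ j ∧ j ≤ n) (hjk : j ≠ k ∧ j ≠ k + 1) :
    ρ (yy n j) u u = ρ (yy n j) t t := by
  have hdj : (ρ (ygen n j hj)).IsDiag := ygen_diag hcal hj
  have hrel : ρ (sgen n k hk) * ρ (ygen n j hj) = ρ (ygen n j hj) * ρ (sgen n k hk) := by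
    have h := map_rel (ρ := ρ) (Rel.sy_comm k j hk hj hjk)
    simpa [sgen, ygen, map_mul] using h
  have h1 : (ρ (sgen n k hk) * ρ (ygen n j hj)) t u
      = (ρ (ygen n j hj) * ρ (sgen n k hk)) t u := by rw [hrel]
  rw [mul_diag_apply hdj, diag_mul_apply hdj] at h1
  have h2 : (ρ (ygen n j hj) u u - ρ (ygen n j hj) t t) * ρ (sgen n k hk) t u = 0 := by
    rw [sub_mul]; linear_combination h1
  rcases mul_eq_zero.mp h2 with h3 | h3
  · rw [yy_eq hj]; linear_combination h3
  · exact absurd h3 hS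

end Rep
section Theta

variable {n d : ℕ} {ρ : sVV n →ₐ[ℂ] Matrix (Fin d) (Fin d) ℂ}

lemma theta_factor_diag (hcal : IsCalibrated ρ) {a b : ℕ} (ha : a < n) (hb : b < n) :
    ((1 : Matrix (Fin d) (Fin d) ℂ) - (ρ (yy n (a+1)) - ρ (yy n (b+1))) ^ 2).IsDiag := by
  have hda : (ρ (yy n (a+1))).IsDiag := hcal (a+1) (by omega) (by omega)
  have hdb : (ρ (yy n (b+1))).IsDiag := hcal (b+1) (by omega) (by omega)
  have hsub := hda.sub hdb
  rw [pow_two]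
  exact Matrix.isDiag_one.sub (isDiag_mul hsub hsub)

lemma theta_factor_entry (hcal : IsCalibrated ρ) {a b : ℕ} (ha : a < n) (hb : b < n)
    (t : Fin d) :
    ((1 : Matrix (Fin d) (Fin d) ℂ) - (ρ (yy n (a+1)) - ρ (yy n (b+1))) ^ 2) t t
      = 1 - (ρ (yy n (a+1)) t t - ρ (yy n (b+1)) t t) ^ 2 := by
  have hda : (ρ (yy n (a+1))).IsDiag := hcal (a+1) (by omega) (by omega)
  have hdb : (ρ (yy n (b+1))).IsDiag := hcal (b+1) (by omega) (by omega)
  have hsub := hda.sub hdb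
  rw [Matrix.sub_apply, Matrix.one_apply_eq, pow_two, pow_two,
    diag_mul_apply hsub, Matrix.sub_apply]

lemma theta_inner_eq (hcal : IsCalibrated ρ) {a : ℕ} (ha : a < n) :
    ρ ((((List.range n).filter fun b => decide (a < b)).map
        fun b => (1 : sVV n) - (yy n (a+1) - yy n (b+1)) ^ 2).prod)
      = (((List.range n).filter fun b => decide (a < b)).map
        fun b => (1 : Matrix (Fin d) (Fin d) ℂ) - (ρ (yy n (a+1)) - ρ (yy n (b+1))) ^ 2).prod := by
  rw [map_list_prod, List.map_map]
  congr 1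
  refine List.map_congr_left fun b hb => ?_
  simp [map_sub, map_one, map_pow]

lemma theta_inner_diag (hcal : IsCalibrated ρ) {a : ℕ} (ha : a < n) :
    (ρ ((((List.range n).filter fun b => decide (a < b)).map
        fun b => (1 : sVV n) - (yy n (a+1) - yy n (b+1)) ^ 2).prod)).IsDiag := by
  rw [theta_inner_eq hcal ha]
  refine list_prod_isDiag fun A hA => ?_
  obtain ⟨b, hb, rfl⟩ := List.mem_map.mp hA
  have hbn : b < n := List.mem_range.mp (List.mem_filter.mp hb).1
  exact theta_factor_diag hcal ha hbn

lemma theta_isDiag (hcal : IsCalibrated ρ) : (ρ (thetaTilde n)).IsDiag := by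
  rw [thetaTilde, map_list_prod, List.map_map]
  refine list_prod_isDiag fun A hA => ?_
  obtain ⟨a, haa, rfl⟩ := List.mem_map.mp hA
  have han : a < n := List.mem_range.mp haa
  exact theta_inner_diag hcal han

lemma theta_entry (hcal : IsCalibrated ρ) (t : Fin d) :
    ρ (thetaTilde n) t t = thetaF n (fun j => ρ (yy n j) t t) := by
  rw [thetaTilde, map_list_prod, List.map_map]
  have houter : ∀ A ∈ (List.range n).map ((fun x => ρ x) ∘ fun a =>
      ((((List.range n).filter fun b => decide (a < b)).map
        fun b => (1 : sVV n) - (yy n (a+1) - yy n (b+1)) ^ 2).prod)), A.IsDiag := by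
    intro A hA
    obtain ⟨a, haa, rfl⟩ := List.mem_map.mp hA
    exact theta_inner_diag hcal (List.mem_range.mp haa)
  rw [list_prod_diag_apply houter t, List.map_map, thetaF]
  congr 1
  refine List.map_congr_left fun a haa => ?_
  have han : a < n := List.mem_range.mp haa
  simp only [Function.comp]
  rw [theta_inner_eq hcal han]
  have hinner : ∀ A ∈ (((List.range n).filter fun b => decide (a < b)).map
      fun b => (1 : Matrix (Fin d) (Fin d) ℂ) - (ρ (yy n (a+1)) - ρ (yy n (b+1))) ^ 2),
      A.IsDiag := by
    intro A hA
    obtain ⟨b, hb, rfl⟩ := List.mem_map.mp hA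
    exact theta_factor_diag hcal han (List.mem_range.mp (List.mem_filter.mp hb).1)
  rw [list_prod_diag_apply hinner t, List.map_map]
  congr 1
  refine List.map_congr_left fun b hb => ?_
  have hbn : b < n := List.mem_range.mp (List.mem_filter.mp hb).1
  simp only [Function.comp]
  exact theta_factor_entry hcal han hbn t

end Theta
section Block

variable {n d : ℕ} {ρ : sVV n →ₐ[ℂ] Matrix (Fin d) (Fin d) ℂ}

lemma egen_theta_zero (hcal : IsCalibrated ρ) {k : ℕ} (hk : 1 ≤ k ∧ k ≤ n - 1) {t u : Fin d}
    (hE : ρ (egen n k hk) t u ≠ 0) :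
    ρ (thetaTilde n) t t = 0 ∧ ρ (thetaTilde n) u u = 0 := by
  obtain ⟨h1, h2⟩ := e_weight hcal hk hE
  constructor
  · rw [theta_entry hcal]
    exact thetaF_eq_zero hk.1 (by omega) (by rw [h1]; ring)
  · rw [theta_entry hcal]
    exact thetaF_eq_zero hk.1 (by omega) (by rw [h2]; ring)

lemma block (hcal : IsCalibrated ρ) :
    ∀ (a : sVV n) (t u : Fin d),
      ρ (thetaTilde n) t t ≠ ρ (thetaTilde n) u u → ρ a t u = 0 := by
  intro a
  obtain ⟨z, rfl⟩ := RingQuot.mkAlgHom_surjective ℂ (Rel n) a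
  induction z using FreeAlgebra.induction with
  | grade0 r =>
    intro t u hM
    have htu : t ≠ u := fun h => hM (by rw [h])
    rw [AlgHom.commutes, AlgHom.commutes, Matrix.algebraMap_matrix_apply, if_neg htu]
  | grade1 g =>
    cases g with
    | Y j h =>
      intro t u hM
      have htu : t ≠ u := fun h => hM (by rw [h])
      exact ygen_diag hcal h htu
    | E i h =>
      intro t u hM
      by_contra hEne
      obtain ⟨z1, z2⟩ := egen_theta_zero hcal h hEne
      exact hM (z1.trans z2.symm)
    | S i h =>
      intro t u hM
      by_contra hS
      have htu : t ≠ u := fun hh => hM (by rw [hh])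
      by_cases hE : ρ (egen n i h) t u = 0
      · obtain ⟨h1, h2⟩ := s_weight hcal h htu hS hE
        have h3 : ∀ j, 1 ≤ j → j ≤ n → j ≠ i → j ≠ i + 1 →
            ρ (yy n j) u u = ρ (yy n j) t t := fun j hj1 hj2 hj3 hj4 =>
          s_weight_other hcal h hS ⟨hj1, hj2⟩ ⟨hj3, hj4⟩
        have hswap := thetaF_swap (n := n) (i-1) i (by omega) (by omega)
          (fun j => ρ (yy n j) t t) (fun j => ρ (yy n j) u u) ?_
        · rw [theta_entry hcal t, theta_entry hcal u] at hM
          exact hM hswap.symm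
        · intro a ha
          by_cases ha1 : a = i - 1
          · rw [ha1, Equiv.swap_apply_left]
            have hii : i - 1 + 1 = i := by omega
            rw [hii]
            exact h1
          · by_cases ha2 : a = i
            · rw [ha2, Equiv.swap_apply_right]
              have hii : i - 1 + 1 = i := by omega
              rw [hii]
              exact h2
            · rw [Equiv.swap_apply_of_ne_of_ne ha1 ha2]
              exact h3 (a+1) (by omega) (by omega) (by omega) (by omega)
      · obtain ⟨z1, z2⟩ := egen_theta_zero hcal h hE
        exact hM (z1.trans z2.symm)
  | mul a b ha hb =>
    intro t u hM
    rw [map_mul, map_mul, Matrix.mul_apply]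
    refine Finset.sum_eq_zero fun r _ => ?_
    by_cases hr : ρ (thetaTilde n) r r = ρ (thetaTilde n) t t
    · rw [hb r u (by rw [hr]; exact hM), mul_zero]
    · rw [ha t r (fun hh => hr hh.symm), zero_mul]
  | add a b ha hb =>
    intro t u hM
    rw [map_add, map_add, Matrix.add_apply, ha t u hM, hb t u hM, add_zero]

/-- Coordinate subspace attached to a predicate on indices. -/
def coordSub (d : ℕ) (P : Fin d → Prop) : Submodule ℂ (Fin d → ℂ) where
  carrier := {v | ∀ r, P r → v r = 0}
  add_mem' := by
    intro v w hv hw r hr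
    simp [Pi.add_apply, hv r hr, hw r hr]
  zero_mem' := by intro r _; rfl
  smul_mem' := by
    intro c v hv r hr
    simp [Pi.smul_apply, hv r hr]

lemma mem_coordSub {d : ℕ} {P : Fin d → Prop} {v : Fin d → ℂ} :
    v ∈ coordSub d P ↔ ∀ r, P r → v r = 0 := Iff.rfl

end Block
/-- If `ρ` is an indecomposable calibrated representation of `sVV n` on which
some `e_i` acts by a nonzero matrix, then `ρ(Θ̃) = 0`. -/
theorem thetaTilde_acts_by_zero (n d : ℕ) (hn : 2 ≤ n) (hd : 1 ≤ d)
    (ρ : sVV n →ₐ[ℂ] Matrix (Fin d) (Fin d) ℂ)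
    (hcal : IsCalibrated ρ) (hind : IsIndecomposableRep ρ)
    (hne : ∃ i : ℕ, 1 ≤ i ∧ i ≤ n - 1 ∧ ρ (ee n i) ≠ 0) :
    ρ (thetaTilde n) = 0 := by
  classical
  have hblock := block (ρ := ρ) hcal
  have hMdiag := theta_isDiag (ρ := ρ) hcal
  -- Step 1: all diagonal entries of ρ(Θ̃) agree.
  have hconst : ∀ t u : Fin d, ρ (thetaTilde n) t t = ρ (thetaTilde n) u u := by
    by_contra hcon
    push_neg at hcon
    obtain ⟨t, u, htu⟩ := hcon
    apply hind
    set c := ρ (thetaTilde n) t t with hc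
    set U := coordSub d (fun r => ρ (thetaTilde n) r r ≠ c) with hU
    set W := coordSub d (fun r => ρ (thetaTilde n) r r = c) with hW
    have hmemU : ∀ v, v ∈ U ↔ ∀ r, ρ (thetaTilde n) r r ≠ c → v r = 0 := fun v => Iff.rfl
    have hmemW : ∀ v, v ∈ W ↔ ∀ r, ρ (thetaTilde n) r r = c → v r = 0 := fun v => Iff.rfl
    refine ⟨U, W, ?_, ?_, ⟨?_, ?_⟩, ?_, ?_⟩
    · -- U ≠ ⊥
      rw [Submodule.ne_bot_iff]
      refine ⟨Pi.single t 1, ?_, ?_⟩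
      · intro r hr
        exact Pi.single_eq_of_ne (fun e => hr (by rw [e])) 1
      · intro h0
        have := congrFun h0 t
        rw [Pi.single_eq_same] at this
        exact one_ne_zero this
    · -- W ≠ ⊥
      rw [Submodule.ne_bot_iff]
      refine ⟨Pi.single u 1, ?_, ?_⟩
      · intro r hr
        refine Pi.single_eq_of_ne (fun e => ?_) 1
        rw [e] at hr
        exact htu hr.symm
      · intro h0
        have := congrFun h0 u
        rw [Pi.single_eq_same] at this
        exact one_ne_zero this
    · -- disjoint
      rw [Submodule.disjoint_def]
      intro v hvU hvW
      funext r
      by_cases hr : ρ (thetaTilde n) r r = c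
      · exact hvW r hr
      · exact hvU r hr
    · -- codisjoint
      rw [codisjoint_iff, eq_top_iff]
      intro v _
      have hsplit : v = (fun r => if ρ (thetaTilde n) r r = c then v r else 0)
          + (fun r => if ρ (thetaTilde n) r r = c then 0 else v r) := by
        funext r
        by_cases hr : ρ (thetaTilde n) r r = c <;> simp [hr]
      rw [hsplit]
      refine Submodule.add_mem_sup ?_ ?_
      · intro r hr
        exact if_neg hr
      · intro r hr
        exact if_pos hr
    · -- invariance of U
      intro a v hv r hr
      show (∑ s, ρ a r s * v s) = 0
      refine Finset.sum_eq_zero fun s _ => ?_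
      by_cases hs : ρ (thetaTilde n) s s = c
      · rw [hblock a r s (by rw [hs]; exact hr), zero_mul]
      · rw [hv s hs, mul_zero]
    · -- invariance of W
      intro a v hv r hr
      show (∑ s, ρ a r s * v s) = 0
      refine Finset.sum_eq_zero fun s _ => ?_
      by_cases hs : ρ (thetaTilde n) s s = c
      · rw [hv s hs, mul_zero]
      · rw [hblock a r s (by rw [hr]; exact fun e => hs e.symm), zero_mul]
  -- Step 2: some diagonal entry of ρ(Θ̃) is zero.
  obtain ⟨i, hi1, hi2, hEne⟩ := hne
  have hEgen : ρ (egen n i ⟨hi1, hi2⟩) ≠ 0 := by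
    rwa [← ee_eq ⟨hi1, hi2⟩]
  have hentry : ∃ a b : Fin d, ρ (egen n i ⟨hi1, hi2⟩) a b ≠ 0 := by
    by_contra hAll
    push_neg at hAll
    apply hEgen
    ext a b
    rw [hAll a b]
    rfl
  obtain ⟨a, b, hab⟩ := hentry
  have hMbb : ρ (thetaTilde n) b b = 0 := (egen_theta_zero hcal ⟨hi1, hi2⟩ hab).2
  -- Conclusion
  ext t u
  by_cases htu : t = u
  · subst htu
    rw [hconst t b, hMbb]
    rfl
  · rw [hMdiag htu]
    rfl
end Periplectic
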